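/- One step of the AAVF method is symmetric: if (q₁, p₁) is obtained from (q₀, p₀) with stepsize h, then (q₀, p₀) is obtained from (q₁, p₁) with stepsize −h. Equivalently, exchanging (q₀,p₀) ↔ (q₁,p₁) and h ↔ −h leaves the defining equations invariant. -/

import Mathlib

noncomputable def phi2 (V : ℝ) : ℝ :=
  if V = 0 then 1/2 else (1 - Real.cos (Real.sqrt V)) / V

noncomputable def sinc (y : ℝ) : ℝ :=
  if y = 0 then 1 else Real.sin y / y

lemma aavf_alg1 (h ω c s I q p : ℝ) (hω : ω ≠ 0) (hh : h ≠ 0) (hpy : s^2 + c^2 = 1) :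
    q = c * (c*q + h*(s/(h*ω))*p + h^2*((1-c)/(h*ω)^2)*I)
      + -h * (s/(h*ω)) * (-ω*s*q + c*p + h*(s/(h*ω))*I)
      + (-h)^2 * ((1-c)/(h*ω)^2) * I := by
  field_simp
  linear_combination (I - q*ω^2) * hpy

lemma aavf_alg2 (h ω c s I q p : ℝ) (hω : ω ≠ 0) (hh : h ≠ 0) (hpy : s^2 + c^2 = 1) :
    p = -ω * -s * (c*q + h*(s/(h*ω))*p + h^2*((1-c)/(h*ω)^2)*I)
      + c * (-ω*s*q + c*p + h*(s/(h*ω))*I)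
      + -h * (s/(h*ω)) * I := by
  field_simp
  linear_combination (-p*ω) * hpy

lemma sinc_neg (y : ℝ) : sinc (-y) = sinc y := by
  unfold sinc
  rcases eq_or_ne y 0 with rfl | hy
  · simp
  · rw [if_neg (neg_ne_zero.mpr hy), if_neg hy, Real.sin_neg, neg_div_neg_eq]

/-- Symmetry of the AAVF method: if `(q₁,p₁)` is obtained from `(q₀,p₀)` with
stepsize `h`, then `(q₀,p₀)` is obtained from `(q₁,p₁)` with stepsize `−h`. -/
theorem stmt13 (n : ℕ) (Ω : Fin n → ℝ) (hΩ : ∀ j, 0 < Ω j) (h : ℝ) (hh : 0 < h)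
    (f : (Fin n → ℝ) → (Fin n → ℝ)) (hfc : Continuous f)
    (q₀ p₀ q₁ p₁ : Fin n → ℝ)
    (hq : ∀ j, q₁ j = Real.cos (h * Ω j) * q₀ j + h * sinc (h * Ω j) * p₀ j
        + h^2 * phi2 ((h * Ω j)^2) * ∫ σ in (0:ℝ)..1, f ((1 - σ) • q₀ + σ • q₁) j)
    (hp : ∀ j, p₁ j = -(Ω j) * Real.sin (h * Ω j) * q₀ j + Real.cos (h * Ω j) * p₀ j
        + h * sinc (h * Ω j) * ∫ σ in (0:ℝ)..1, f ((1 - σ) • q₀ + σ • q₁) j) :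
    (∀ j, q₀ j = Real.cos ((-h) * Ω j) * q₁ j + (-h) * sinc ((-h) * Ω j) * p₁ j
        + (-h)^2 * phi2 (((-h) * Ω j)^2) * ∫ σ in (0:ℝ)..1, f ((1 - σ) • q₁ + σ • q₀) j) ∧
    (∀ j, p₀ j = -(Ω j) * Real.sin ((-h) * Ω j) * q₁ j + Real.cos ((-h) * Ω j) * p₁ j
        + (-h) * sinc ((-h) * Ω j) * ∫ σ in (0:ℝ)..1, f ((1 - σ) • q₁ + σ • q₀) j) := by
  have hswap : ∀ j, (∫ σ in (0:ℝ)..1, f ((1 - σ) • q₁ + σ • q₀) j)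
      = ∫ σ in (0:ℝ)..1, f ((1 - σ) • q₀ + σ • q₁) j := by
    intro j
    calc ∫ σ in (0:ℝ)..1, f ((1 - σ) • q₁ + σ • q₀) j
        = ∫ σ in (0:ℝ)..1, (fun τ => f ((1 - τ) • q₀ + τ • q₁) j) (1 - σ) := by
          apply intervalIntegral.integral_congr
          intro σ _
          simp only
          congr 1
          rw [show (1 : ℝ) - (1 - σ) = σ by ring]
          exact add_comm _ _
      _ = ∫ τ in (1-(1:ℝ))..(1-(0:ℝ)), f ((1 - τ) • q₀ + τ • q₁) j := by
          exact intervalIntegral.integral_comp_sub_left (fun τ => f ((1 - τ) • q₀ + τ • q₁) j) 1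
      _ = ∫ σ in (0:ℝ)..1, f ((1 - σ) • q₀ + σ • q₁) j := by norm_num
  have key : ∀ j, ∃ x : ℝ, x = h * Ω j ∧ 0 < x := fun j => ⟨h * Ω j, rfl, mul_pos hh (hΩ j)⟩
  have trig : ∀ j,
      Real.cos ((-h) * Ω j) = Real.cos (h * Ω j) ∧
      Real.sin ((-h) * Ω j) = -Real.sin (h * Ω j) ∧
      sinc ((-h) * Ω j) = sinc (h * Ω j) ∧
      phi2 (((-h) * Ω j)^2) = phi2 ((h * Ω j)^2) := by
    intro j
    rw [show (-h) * Ω j = -(h * Ω j) by ring]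
    exact ⟨Real.cos_neg _, Real.sin_neg _, sinc_neg _, by rw [neg_sq]⟩
  have hval : ∀ j, sinc (h * Ω j) = Real.sin (h * Ω j) / (h * Ω j) ∧
      phi2 ((h * Ω j)^2) = (1 - Real.cos (h * Ω j)) / (h * Ω j)^2 := by
    intro j
    have hx : 0 < h * Ω j := mul_pos hh (hΩ j)
    constructor
    · unfold sinc; rw [if_neg hx.ne']
    · unfold phi2
      rw [if_neg (pow_ne_zero 2 hx.ne'), Real.sqrt_sq hx.le]
  constructor
  · intro j
    obtain ⟨hc, hs, hsc, hph⟩ := trig j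
    obtain ⟨hv1, hv2⟩ := hval j
    have hx : 0 < h * Ω j := mul_pos hh (hΩ j)
    simp only [hswap j, hc, hs, hsc, hph, hq j, hp j, hv1, hv2]
    exact aavf_alg1 h (Ω j) _ _ _ _ _ (hΩ j).ne' hh.ne'
      (Real.sin_sq_add_cos_sq (h * Ω j))
  · intro j
    obtain ⟨hc, hs, hsc, hph⟩ := trig j
    obtain ⟨hv1, hv2⟩ := hval j
    have hx : 0 < h * Ω j := mul_pos hh (hΩ j)
    simp only [hswap j, hc, hs, hsc, hph, hq j, hp j, hv1, hv2]
    exact aavf_alg2 h (Ω j) _ _ _ _ _ (hΩ j).ne' hh.ne'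
      (Real.sin_sq_add_cos_sq (h * Ω j))
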